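/- arXiv:2008.07047 — 2 statements merged into one kernel-verified Lean document; each statement's English description precedes it below -/
import Mathlib

section
/- Let p be a prime and n ≥ 1. Suppose (M,D) and (M̃,D̃) are conjugate in GL_n(p) (M, M̃ ∈ M_n(ℤ) expanding integer matrices, D, D̃ ⊂ ℤ^n finite digit sets). If Z_{D̃}^n ⊆ E̊_p^n or Z_D^n ⊆ E̊_p^n, then (M,D) is admissible if and only if (M̃,D̃) is admissible. -/
open MeasureTheory Matrix Set Complex
open scoped Real Pointwise ENNReal

noncomputable section

namespace SA

variable {n : ℕ}

/-- Cast an integer matrix to a real matrix. -/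
def toR (M : Matrix (Fin n) (Fin n) ℤ) : Matrix (Fin n) (Fin n) ℝ :=
  M.map (Int.cast : ℤ → ℝ)

/-- Cast an integer vector to a real vector. -/
def vecR (d : Fin n → ℤ) : Fin n → ℝ := fun i => (d i : ℝ)

/-- A real matrix is expanding if all of its complex eigenvalues have modulus > 1. -/
def IsExpandingR (M : Matrix (Fin n) (Fin n) ℝ) : Prop :=
  ∀ z : ℂ, (M.map (Complex.ofReal)).charpoly.IsRoot z → 1 < ‖z‖

/-- An integer matrix is expanding if all of its complex eigenvalues have modulus > 1. -/
def IsExpanding (M : Matrix (Fin n) (Fin n) ℤ) : Prop :=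
  IsExpandingR (toR M)

/-- Standard inner product on `ℝ^n`. -/
def dotR (x y : Fin n → ℝ) : ℝ := ∑ i, x i * y i

/-- The exponential function `e_λ(x) = e^{2πi⟨λ,x⟩}`. -/
def expFun (lam : Fin n → ℝ) : (Fin n → ℝ) → ℂ :=
  fun x => Complex.exp (2 * Real.pi * Complex.I * (dotR lam x))

/-- Mask polynomial of a finite real digit set. -/
def maskR (D : Finset (Fin n → ℝ)) (x : Fin n → ℝ) : ℂ :=
  (D.card : ℂ)⁻¹ * ∑ d ∈ D, Complex.exp (2 * Real.pi * Complex.I * (dotR d x))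

/-- Zero set of the mask polynomial of a real digit set. -/
def maskZR (D : Finset (Fin n → ℝ)) : Set (Fin n → ℝ) := {x | maskR D x = 0}

/-- Mask polynomial of a finite integer digit set. -/
def mask (D : Finset (Fin n → ℤ)) (x : Fin n → ℝ) : ℂ :=
  (D.card : ℂ)⁻¹ * ∑ d ∈ D, Complex.exp (2 * Real.pi * Complex.I * (dotR (vecR d) x))

/-- Zero set `Z(m_D)` of the mask polynomial of an integer digit set. -/
def maskZ (D : Finset (Fin n → ℤ)) : Set (Fin n → ℝ) := {x | mask D x = 0}

/-- `Z_D^n := Z(m_D) ∩ [0,1)^n`. -/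
def ZDn (D : Finset (Fin n → ℤ)) : Set (Fin n → ℝ) :=
  maskZ D ∩ {x | ∀ i, 0 ≤ x i ∧ x i < 1}

/-- `E̊_p^n := (1/p){(l₁,…,l_n) : 0 ≤ lᵢ ≤ p-1} \ {0}`. -/
def Ering (p n : ℕ) : Set (Fin n → ℝ) :=
  {x | (∃ l : Fin n → ℕ, (∀ i, l i ≤ p - 1) ∧ ∀ i, x i = (l i : ℝ) / p) ∧ x ≠ 0}

/-- The integer lattice `ℤ^n` inside `ℝ^n`. -/
def latticeZ (n : ℕ) : Set (Fin n → ℝ) := {x | ∀ i, ∃ k : ℤ, x i = (k : ℝ)}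

/-- `μ` is the self-affine measure generated by the real expanding matrix `M`
and the real digit set `D`: it is a Borel probability measure satisfying
`μ = (1/|D|) ∑_{d∈D} μ ∘ φ_d⁻¹` with `φ_d(x) = M⁻¹(x+d)`. -/
def IsSelfAffineR (M : Matrix (Fin n) (Fin n) ℝ) (D : Finset (Fin n → ℝ))
    (μ : Measure (Fin n → ℝ)) : Prop :=
  IsProbabilityMeasure μ ∧
    μ = (D.card : ℝ≥0∞)⁻¹ • ∑ d ∈ D, μ.map (fun x => M⁻¹.mulVec (x + d))

/-- `μ` is the self-affine measure generated by the integer expanding matrix `M`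
and the integer digit set `D`. -/
def IsSelfAffine (M : Matrix (Fin n) (Fin n) ℤ) (D : Finset (Fin n → ℤ))
    (μ : Measure (Fin n → ℝ)) : Prop :=
  IsProbabilityMeasure μ ∧
    μ = (D.card : ℝ≥0∞)⁻¹ • ∑ d ∈ D, μ.map (fun x => (toR M)⁻¹.mulVec (x + vecR d))

/-- Fourier transform `μ̂(ξ) = ∫ e^{2πi⟨x,ξ⟩} dμ(x)`. -/
def FT (μ : Measure (Fin n → ℝ)) (ξ : Fin n → ℝ) : ℂ :=
  ∫ x, Complex.exp (2 * Real.pi * Complex.I * (dotR x ξ)) ∂μ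

/-- The family of exponentials `E(Λ)` is mutually orthogonal in `L²(μ)`:
`μ̂(λ - λ') = 0` for all distinct `λ, λ' ∈ Λ`. -/
def OrthExp (μ : Measure (Fin n → ℝ)) (Λ : Set (Fin n → ℝ)) : Prop :=
  ∀ a ∈ Λ, ∀ b ∈ Λ, a ≠ b → FT μ (a - b) = 0

/-- `Λ` is a spectrum of `μ`: the exponentials `{e^{2πi⟨λ,x⟩} : λ ∈ Λ}` form an
orthonormal (Hilbert) basis of `L²(μ)`. -/
def IsSpectrum (μ : Measure (Fin n → ℝ)) (Λ : Set (Fin n → ℝ)) : Prop :=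
  ∃ b : HilbertBasis Λ ℂ (Lp ℂ 2 μ), ∀ l : Λ, (b l : Lp ℂ 2 μ) =ᵐ[μ] expFun (l : Fin n → ℝ)

/-- `μ` is a spectral measure. -/
def IsSpectralMeasure (μ : Measure (Fin n → ℝ)) : Prop :=
  ∃ Λ : Set (Fin n → ℝ), Λ.Countable ∧ IsSpectrum μ Λ

/-- `(M, D)` is admissible: there is `S ⊂ ℤ^n` with `|S| = |D|` such that
`H = (1/√|S|)[e^{2πi⟨M⁻¹d,s⟩}]_{d∈D,s∈S}` satisfies `H^*H = I`. -/
def Admissible (M : Matrix (Fin n) (Fin n) ℤ) (D : Finset (Fin n → ℤ)) : Prop :=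
  ∃ S : Finset (Fin n → ℤ), S.card = D.card ∧
    letI H : Matrix {d // d ∈ D} {s // s ∈ S} ℂ := fun d s =>
      ((1 : ℂ) / (Real.sqrt S.card : ℂ)) *
        Complex.exp (2 * Real.pi * Complex.I *
          (dotR ((toR M)⁻¹.mulVec (vecR (d : Fin n → ℤ))) (vecR (s : Fin n → ℤ))))
    Hᴴ * H = 1

/-- Two matrices are congruent entrywise modulo `p`. -/
def ModEq (p : ℕ) (A B : Matrix (Fin n) (Fin n) ℤ) : Prop :=
  ∀ i j, (p : ℤ) ∣ (A i j - B i j)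

/-- `(M, D)` and `(M̃, D̃)` are conjugate in `GL_n(p)`: there are integer matrices
`A, B` with determinants prime to `p`, `AB ≡ I (mod p)`, `M̃ = AMB`, and either
`D = B D̃` or `D̃ = A D`. -/
def ConjugateGL (p : ℕ) (M Mt : Matrix (Fin n) (Fin n) ℤ)
    (D Dt : Finset (Fin n → ℤ)) : Prop :=
  ∃ A B : Matrix (Fin n) (Fin n) ℤ,
    ¬ (p : ℤ) ∣ A.det ∧ ¬ (p : ℤ) ∣ B.det ∧ ModEq p (A * B) 1 ∧ Mt = A * M * B ∧
      ((∀ d, d ∈ D ↔ ∃ dt ∈ Dt, d = B.mulVec dt) ∨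
       (∀ dt, dt ∈ Dt ↔ ∃ d ∈ D, dt = A.mulVec d))


-- chunk1 lemmas
lemma vecR_injective : Function.Injective (vecR (n := n)) := by
  intro a b h
  funext i
  have := congrFun h i
  simp only [vecR] at this
  exact_mod_cast this

lemma vecR_zero : vecR (0 : Fin n → ℤ) = 0 := by funext i; simp [vecR]

lemma vecR_sub (a b : Fin n → ℤ) : vecR (a - b) = vecR a - vecR b := by
  funext i; simp [vecR]

lemma vecR_add (a b : Fin n → ℤ) : vecR (a + b) = vecR a + vecR b := by
  funext i; simp [vecR]

lemma vecR_smul (k : ℤ) (a : Fin n → ℤ) : vecR (k • a) = (k : ℝ) • vecR a := by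
  funext i; simp [vecR]

lemma vecR_mulVec (C : Matrix (Fin n) (Fin n) ℤ) (v : Fin n → ℤ) :
    vecR (C *ᵥ v) = toR C *ᵥ vecR v := by
  funext i
  simp only [vecR, toR, Matrix.mulVec, dotProduct, Matrix.map_apply]
  push_cast
  rfl

lemma toR_transpose (C : Matrix (Fin n) (Fin n) ℤ) : (toR C)ᵀ = toR Cᵀ := by
  ext i j; simp [toR]

lemma toR_mul (C E : Matrix (Fin n) (Fin n) ℤ) : toR (C * E) = toR C * toR E := by
  ext i j
  simp only [toR, Matrix.map_apply, Matrix.mul_apply]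
  push_cast
  rfl

lemma toR_one : toR (1 : Matrix (Fin n) (Fin n) ℤ) = 1 := by
  ext i j
  simp only [toR, Matrix.map_apply, Matrix.one_apply]
  split <;> simp

lemma toR_det (C : Matrix (Fin n) (Fin n) ℤ) : (toR C).det = (C.det : ℝ) :=
  ((Int.castRingHom ℝ).map_det C).symm

lemma toR_adjugate (C : Matrix (Fin n) (Fin n) ℤ) : toR C.adjugate = (toR C).adjugate := by
  have h : (Int.cast : ℤ → ℝ) = ⇑(Int.castRingHom ℝ) := rfl
  unfold toR
  rw [h, ← RingHom.mapMatrix_apply, ← RingHom.mapMatrix_apply, (Int.castRingHom ℝ).map_adjugate]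

lemma dotR_sub_right (x y z : Fin n → ℝ) : dotR x (y - z) = dotR x y - dotR x z := by
  simp [dotR, mul_sub, Finset.sum_sub_distrib]

lemma dotR_mulVec_left (C : Matrix (Fin n) (Fin n) ℝ) (v y : Fin n → ℝ) :
    dotR (C *ᵥ v) y = dotR v (Cᵀ *ᵥ y) := by
  show (C *ᵥ v) ⬝ᵥ y = v ⬝ᵥ (Cᵀ *ᵥ y)
  rw [Matrix.mulVec_transpose, dotProduct_comm, Matrix.dotProduct_mulVec,
    dotProduct_comm]

lemma dotR_int (d z : Fin n → ℤ) : dotR (vecR d) (vecR z) = ((d ⬝ᵥ z : ℤ) : ℝ) := by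
  simp only [dotR, vecR, dotProduct]
  push_cast
  rfl

lemma mask_add_int (D : Finset (Fin n → ℤ)) (x : Fin n → ℝ) (z : Fin n → ℤ) :
    mask D (x + vecR z) = mask D x := by
  unfold mask
  congr 1
  refine Finset.sum_congr rfl fun d _ => ?_
  have h1 : dotR (vecR d) (x + vecR z) = dotR (vecR d) x + ((d ⬝ᵥ z : ℤ) : ℝ) := by
    rw [← dotR_int]
    simp [dotR, mul_add, Finset.sum_add_distrib]
  rw [h1]
  rw [Complex.ofReal_add, mul_add, Complex.exp_add]
  have h2 : (2 * (Real.pi : ℂ) * Complex.I * ((d ⬝ᵥ z : ℤ) : ℝ)) =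
      ((d ⬝ᵥ z : ℤ) : ℂ) * (2 * (Real.pi : ℂ) * Complex.I) := by
    push_cast; ring
  rw [h2, Complex.exp_int_mul_two_pi_mul_I, mul_one]

lemma mask_zero_eq_one {D : Finset (Fin n → ℤ)} (hD : D.Nonempty) : mask D (0 : Fin n → ℝ) = 1 := by
  unfold mask
  have : ∀ d ∈ D, Complex.exp (2 * Real.pi * Complex.I * (dotR (vecR d) 0)) = 1 := by
    intro d _
    have : dotR (vecR d) 0 = 0 := by simp [dotR]
    rw [this]; simp
  rw [Finset.sum_congr rfl this, Finset.sum_const, nsmul_eq_mul, mul_one]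
  have hc : (D.card : ℂ) ≠ 0 := by
    exact_mod_cast Nat.cast_ne_zero.mpr (Finset.card_ne_zero_of_mem hD.choose_spec)
  field_simp


lemma vecR_neg (a : Fin n → ℤ) : vecR (-a) = -vecR a := by
  funext i; simp [vecR]

lemma exists_int_of_mask_zero {p : ℕ} (hppos : 0 < p) {D : Finset (Fin n → ℤ)}
    (hZ : ZDn D ⊆ Ering p n) {x : Fin n → ℝ} (hx : mask D x = 0) :
    ∃ w : Fin n → ℤ, vecR w = (p : ℝ) • x := by
  have hxe : x = (fun i => Int.fract (x i)) + vecR (fun i => ⌊x i⌋) := by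
    funext i
    show x i = Int.fract (x i) + ((⌊x i⌋ : ℤ) : ℝ)
    rw [Int.fract_add_floor]
  have hy : mask D (fun i => Int.fract (x i)) = 0 := by
    rw [hxe, mask_add_int] at hx
    exact hx
  have hmem : (fun i => Int.fract (x i)) ∈ ZDn D :=
    ⟨hy, fun i => ⟨Int.fract_nonneg _, Int.fract_lt_one _⟩⟩
  obtain ⟨⟨l, -, hval⟩, -⟩ := hZ hmem
  refine ⟨fun i => (l i : ℤ) + p * ⌊x i⌋, ?_⟩
  funext i
  have h1 : Int.fract (x i) = (l i : ℝ) / p := hval i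
  have hp0 : (p : ℝ) ≠ 0 := by positivity
  have h5 : (p : ℝ) * x i = (l i : ℝ) + p * ⌊x i⌋ := by
    have h3 : x i - ⌊x i⌋ = (l i : ℝ) / p := by rw [Int.self_sub_floor, h1]
    have h4 : (p : ℝ) * ((l i : ℝ) / p) = (l i : ℝ) := by field_simp
    nlinarith [h3, h4]
  simp only [vecR, Pi.smul_apply, smul_eq_mul]
  push_cast
  rw [h5]

def Hmat (M : Matrix (Fin n) (Fin n) ℤ) (D S : Finset (Fin n → ℤ)) :
    Matrix {d // d ∈ D} {s // s ∈ S} ℂ := fun d s =>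
  ((1 : ℂ) / (Real.sqrt S.card : ℂ)) *
    Complex.exp (2 * Real.pi * Complex.I *
      (dotR ((toR M)⁻¹.mulVec (vecR (d : Fin n → ℤ))) (vecR (s : Fin n → ℤ))))

lemma admissible_iff (M : Matrix (Fin n) (Fin n) ℤ) (D : Finset (Fin n → ℤ)) :
    Admissible M D ↔ ∃ S : Finset (Fin n → ℤ), S.card = D.card ∧
      (Hmat M D S)ᴴ * Hmat M D S = 1 := Iff.rfl

lemma conj_term (N : ℕ) (a a' : ℝ) :
    star (((1 : ℂ) / (Real.sqrt N : ℂ)) * Complex.exp (2 * Real.pi * Complex.I * a)) *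
      (((1 : ℂ) / (Real.sqrt N : ℂ)) * Complex.exp (2 * Real.pi * Complex.I * a')) =
    (N : ℂ)⁻¹ * Complex.exp (2 * Real.pi * Complex.I * ((a' - a : ℝ) : ℂ)) := by
  rw [star_mul']
  have h1 : star ((1 : ℂ) / (Real.sqrt N : ℂ)) = ((1 : ℂ) / (Real.sqrt N : ℂ)) := by
    rw [Complex.star_def, map_div₀]
    simp [Complex.conj_ofReal]
  have h2 : star (Complex.exp (2 * Real.pi * Complex.I * a)) =
      Complex.exp (-(2 * Real.pi * Complex.I * a)) := by
    rw [Complex.star_def, ← Complex.exp_conj]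
    congr 1
    have h : (2 * (Real.pi : ℂ) * Complex.I * (a : ℂ)) =
        ((2 * Real.pi * a : ℝ) : ℂ) * Complex.I := by push_cast; ring
    rw [h, _root_.map_mul, Complex.conj_ofReal, Complex.conj_I]
    push_cast; ring
  rw [h1, h2, mul_mul_mul_comm]
  have h3 : ((1 : ℂ) / (Real.sqrt N : ℂ)) * ((1 : ℂ) / (Real.sqrt N : ℂ)) = (N : ℂ)⁻¹ := by
    rw [div_mul_div_comm, one_mul, ← Complex.ofReal_mul,
      Real.mul_self_sqrt (Nat.cast_nonneg N)]
    push_cast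
    rw [one_div]
  rw [h3, ← Complex.exp_add]
  congr 1
  push_cast
  ring

lemma HtH_apply (M : Matrix (Fin n) (Fin n) ℤ) (D S : Finset (Fin n → ℤ))
    (hcard : S.card = D.card) (σ σ' : {s // s ∈ S}) :
    ((Hmat M D S)ᴴ * Hmat M D S) σ σ' =
      mask D (((toR M)ᵀ)⁻¹ *ᵥ (vecR (σ' : Fin n → ℤ) - vecR (σ : Fin n → ℤ))) := by
  classical
  rw [Matrix.mul_apply]
  have hterm : ∀ d : {d // d ∈ D},
      (Hmat M D S)ᴴ σ d * Hmat M D S d σ' =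
        (D.card : ℂ)⁻¹ * Complex.exp (2 * Real.pi * Complex.I *
          ((dotR (vecR (d : Fin n → ℤ))
            (((toR M)ᵀ)⁻¹ *ᵥ (vecR (σ' : Fin n → ℤ) - vecR (σ : Fin n → ℤ))) : ℝ) : ℂ)) := by
    intro d
    rw [Matrix.conjTranspose_apply]
    have harg : dotR ((toR M)⁻¹.mulVec (vecR (d : Fin n → ℤ))) (vecR (σ' : Fin n → ℤ)) -
        dotR ((toR M)⁻¹.mulVec (vecR (d : Fin n → ℤ))) (vecR (σ : Fin n → ℤ)) =
        dotR (vecR (d : Fin n → ℤ))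
          (((toR M)ᵀ)⁻¹ *ᵥ (vecR (σ' : Fin n → ℤ) - vecR (σ : Fin n → ℤ))) := by
      rw [← Matrix.transpose_nonsing_inv, ← dotR_mulVec_left, dotR_sub_right]
    rw [← harg]
    unfold Hmat
    rw [conj_term, hcard]
  rw [Finset.sum_congr rfl (fun d _ => hterm d), ← Finset.mul_sum]
  unfold mask
  rw [← Finset.sum_coe_sort D (fun d => Complex.exp (2 * Real.pi * Complex.I *
    (dotR (vecR d) (((toR M)ᵀ)⁻¹ *ᵥ (vecR (σ' : Fin n → ℤ) - vecR (σ : Fin n → ℤ))))))]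

lemma admissible_of {M : Matrix (Fin n) (Fin n) ℤ} {D : Finset (Fin n → ℤ)} (hD : D.Nonempty)
    (s : Fin D.card → (Fin n → ℤ)) (hinj : Function.Injective s)
    (hmask : ∀ i j, i ≠ j →
      mask D (((toR M)ᵀ)⁻¹ *ᵥ (vecR (s i) - vecR (s j))) = 0) :
    Admissible M D := by
  classical
  rw [admissible_iff]
  have hcard : (Finset.univ.image s).card = D.card := by
    rw [Finset.card_image_of_injective _ hinj, Finset.card_univ, Fintype.card_fin]
  refine ⟨Finset.univ.image s, hcard, ?_⟩
  ext σ σ'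
  rw [HtH_apply M D _ hcard]
  obtain ⟨i, -, hi⟩ := Finset.mem_image.mp σ.2
  obtain ⟨j, -, hj⟩ := Finset.mem_image.mp σ'.2
  by_cases h : σ = σ'
  · subst h
    rw [Matrix.one_apply_eq, sub_self, Matrix.mulVec_zero, mask_zero_eq_one hD]
  · rw [Matrix.one_apply_ne h]
    have hij : j ≠ i := by
      intro e
      apply h
      apply Subtype.ext
      rw [← hi, ← hj, e]
    have hm := hmask j i hij
    rw [← hi, ← hj]
    exact hm

lemma exists_of_admissible {M : Matrix (Fin n) (Fin n) ℤ} {D : Finset (Fin n → ℤ)}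
    (h : Admissible M D) :
    ∃ s : Fin D.card → (Fin n → ℤ), Function.Injective s ∧
      ∀ i j, i ≠ j → mask D (((toR M)ᵀ)⁻¹ *ᵥ (vecR (s i) - vecR (s j))) = 0 := by
  classical
  rw [admissible_iff] at h
  obtain ⟨S, hcard, hH⟩ := h
  set e : Fin D.card → {x // x ∈ S} := fun i => S.equivFin.symm (Fin.cast hcard.symm i) with he
  have hei : Function.Injective e := by
    intro a b hab
    have h2 := S.equivFin.symm.injective hab
    have hv : (a : ℕ) = (b : ℕ) := by simpa using congrArg Fin.val h2
    exact Fin.ext hv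
  refine ⟨fun i => (e i : Fin n → ℤ), ?_, ?_⟩
  · intro a b hab
    exact hei (Subtype.ext hab)
  · intro i j hij
    have hne : e j ≠ e i := fun hc => hij (hei hc).symm
    have h2 := congrFun (congrFun hH (e j)) (e i)
    rw [HtH_apply M D S hcard (e j) (e i)] at h2
    rw [Matrix.one_apply_ne hne] at h2
    exact h2

lemma admissible_empty (M : Matrix (Fin n) (Fin n) ℤ) :
    Admissible M (∅ : Finset (Fin n → ℤ)) := by
  rw [admissible_iff]
  refine ⟨∅, rfl, ?_⟩
  ext d s
  exact absurd d.2 (Finset.notMem_empty _)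

lemma admissible_core {p : ℕ} (hp : p.Prime) {M' : Matrix (Fin n) (Fin n) ℤ}
    (hdet : (toR M').det ≠ 0) {D' : Finset (Fin n → ℤ)} (hD' : D'.Nonempty)
    (c e : Fin D'.card → (Fin n → ℤ)) (q : ℤ) (hq : IsCoprime (p : ℤ) q)
    (hmask : ∀ i j, i ≠ j → mask D' ((p : ℝ)⁻¹ • vecR (c i - c j)) = 0)
    (he : ∀ i, q • (M'ᵀ *ᵥ c i) = (p : ℤ) • e i) :
    Admissible M' D' := by
  obtain ⟨α, β, hαβ⟩ := hq
  have hp0 : (p : ℝ) ≠ 0 := Nat.cast_ne_zero.mpr hp.ne_zero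
  have hdetT : ((toR M')ᵀ).det ≠ 0 := by rwa [Matrix.det_transpose]
  have hdetTu : IsUnit ((toR M')ᵀ).det := isUnit_iff_ne_zero.mpr hdetT
  have h1 : (α : ℝ) * p + (β : ℝ) * q = 1 := by exact_mod_cast hαβ
  set g : Fin D'.card → Fin D'.card → (Fin n → ℝ) := fun i j =>
    (p : ℝ)⁻¹ • vecR ((β * q) • (c i - c j)) with hg
  have key : ∀ i j, vecR (β • e i) - vecR (β • e j) = (toR M')ᵀ *ᵥ g i j := by
    intro i j
    have hint : q • (M'ᵀ *ᵥ (c i - c j)) = (p : ℤ) • (e i - e j) := by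
      rw [Matrix.mulVec_sub, smul_sub, he i, he j, smul_sub]
    have hmid : (toR M')ᵀ *ᵥ vecR ((β * q) • (c i - c j)) = vecR (((p : ℤ) * β) • (e i - e j)) := by
      rw [toR_transpose, ← vecR_mulVec]
      congr 1
      rw [Matrix.mulVec_smul, ← smul_smul, hint, smul_smul, mul_comm β (p : ℤ)]
    apply smul_right_injective (Fin n → ℝ) hp0
    show (p : ℝ) • (vecR (β • e i) - vecR (β • e j)) = (p : ℝ) • ((toR M')ᵀ *ᵥ g i j)
    have hpg : (p : ℝ) • g i j = vecR ((β * q) • (c i - c j)) := by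
      rw [hg]
      rw [smul_smul, mul_inv_cancel₀ hp0, one_smul]
    rw [← Matrix.mulVec_smul, hpg, hmid]
    funext k
    simp only [Pi.smul_apply, Pi.sub_apply, vecR, Pi.intCast_apply, smul_eq_mul]
    push_cast
    ring
  have hmask' : ∀ i j, i ≠ j → mask D' (g i j) = 0 := by
    intro i j hij
    have hshift : g i j = (p : ℝ)⁻¹ • vecR (c i - c j) + vecR (-(α • (c i - c j))) := by
      funext k
      simp only [hg, Pi.smul_apply, Pi.add_apply, Pi.neg_apply, Pi.sub_apply, vecR, smul_eq_mul]
      push_cast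
      have hx : (β : ℝ) * q = 1 - (α : ℝ) * p := by linarith
      field_simp
      linear_combination ((c i k : ℝ) - (c j k : ℝ)) * h1
    rw [hshift, mask_add_int]
    exact hmask i j hij
  apply admissible_of hD' (fun i => β • e i)
  · intro i j hsij
    by_contra hij
    have hsij' : β • e i = β • e j := hsij
    have h0 : (toR M')ᵀ *ᵥ g i j = 0 := by
      rw [← key i j, hsij', sub_self]
    have hg0 : g i j = 0 := by
      have h2 := congrArg (fun v => (((toR M')ᵀ)⁻¹) *ᵥ v) h0
      simp only [Matrix.mulVec_mulVec, Matrix.nonsing_inv_mul _ hdetTu, Matrix.one_mulVec,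
        Matrix.mulVec_zero] at h2
      exact h2
    have hcontra := hmask' i j hij
    rw [hg0, mask_zero_eq_one hD'] at hcontra
    exact one_ne_zero hcontra
  · intro i j hij
    show mask D' (((toR M')ᵀ)⁻¹ *ᵥ (vecR (β • e i) - vecR (β • e j))) = 0
    have hcan : (((toR M')ᵀ)⁻¹) *ᵥ (vecR (β • e i) - vecR (β • e j)) = g i j := by
      rw [key i j, Matrix.mulVec_mulVec, Matrix.nonsing_inv_mul _ hdetTu, Matrix.one_mulVec]
    rw [hcan]
    exact hmask' i j hij

lemma inv_p_smul_shift {p : ℕ} (hp0 : (p : ℝ) ≠ 0) (w z : Fin n → ℤ) :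
    (p : ℝ)⁻¹ • vecR (w + (p : ℤ) • z) = (p : ℝ)⁻¹ • vecR w + vecR z := by
  funext k
  simp only [Pi.smul_apply, Pi.add_apply, vecR, smul_eq_mul]
  push_cast
  field_simp

lemma det_ne_zero_of_expanding {M : Matrix (Fin n) (Fin n) ℤ} (h : IsExpanding M) :
    (toR M).det ≠ 0 := by
  intro h0
  have hre : (Complex.ofReal : ℝ → ℂ) = ⇑Complex.ofRealHom := rfl
  have hdc : ((toR M).map Complex.ofReal).det = 0 := by
    rw [hre, ← RingHom.mapMatrix_apply, ← RingHom.map_det, h0, map_zero]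
  have hroot : ((toR M).map Complex.ofReal).charpoly.IsRoot 0 := by
    have hdet := Matrix.det_eq_sign_charpoly_coeff ((toR M).map Complex.ofReal)
    rw [hdc] at hdet
    have hcoeff : ((toR M).map Complex.ofReal).charpoly.coeff 0 = 0 := by
      rcases mul_eq_zero.mp hdet.symm with hh | hh
      · exact absurd hh (pow_ne_zero _ (by norm_num))
      · exact hh
    rw [Polynomial.IsRoot.def, ← Polynomial.coeff_zero_eq_eval_zero]
    exact hcoeff
  have := h 0 hroot
  rw [norm_zero] at this
  linarith

lemma det_ne_zero_of_not_dvd {p : ℕ} {A : Matrix (Fin n) (Fin n) ℤ} (h : ¬ (p : ℤ) ∣ A.det) :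
    (toR A).det ≠ 0 := by
  have hA : A.det ≠ 0 := fun h0 => h (h0 ▸ dvd_zero _)
  rw [toR_det]
  exact_mod_cast hA

lemma coprime_det {p : ℕ} (hp : p.Prime) {b : ℤ} (h : ¬ (p : ℤ) ∣ b) : IsCoprime (p : ℤ) b := by
  rw [Int.isCoprime_iff_gcd_eq_one]
  have h2 : ¬ p ∣ b.natAbs := by
    intro hd
    apply h
    rw [← Int.dvd_natAbs]
    exact_mod_cast hd
  simpa [Int.gcd, Int.natAbs_natCast] using (Nat.Prime.coprime_iff_not_dvd hp).mpr h2

lemma map_zmod_mul {p : ℕ} (A B : Matrix (Fin n) (Fin n) ℤ) (i j : Fin n) :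
    (((A * B) i j : ℤ) : ZMod p) =
      ((A.map (Int.cast : ℤ → ZMod p)) * (B.map (Int.cast : ℤ → ZMod p))) i j := by
  rw [Matrix.mul_apply, Matrix.mul_apply]
  push_cast [Matrix.map_apply]
  rfl

lemma map_zmod_one {p : ℕ} (i j : Fin n) :
    (((1 : Matrix (Fin n) (Fin n) ℤ) i j : ℤ) : ZMod p) =
      (1 : Matrix (Fin n) (Fin n) (ZMod p)) i j := by
  simp only [Matrix.one_apply]
  split <;> simp

lemma modeq_comm {p : ℕ} (hp : p.Prime) {A B : Matrix (Fin n) (Fin n) ℤ}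
    (h : ModEq p (A * B) 1) : ModEq p (B * A) 1 := by
  haveI : NeZero p := ⟨hp.ne_zero⟩
  have h1 : (A.map (Int.cast : ℤ → ZMod p)) * (B.map (Int.cast : ℤ → ZMod p)) = 1 := by
    ext i j
    rw [← map_zmod_mul, ← map_zmod_one (p := p) i j, ← sub_eq_zero, ← Int.cast_sub,
      ZMod.intCast_zmod_eq_zero_iff_dvd]
    exact h i j
  have h2 : (B.map (Int.cast : ℤ → ZMod p)) * (A.map (Int.cast : ℤ → ZMod p)) = 1 :=
    mul_eq_one_comm.mp h1
  intro i j
  rw [← ZMod.intCast_zmod_eq_zero_iff_dvd (b := p), Int.cast_sub, sub_eq_zero,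
    map_zmod_mul, map_zmod_one (p := p) i j, h2]

lemma exists_G {p : ℕ} {X : Matrix (Fin n) (Fin n) ℤ} (h : ModEq p X 1) :
    ∃ G : Matrix (Fin n) (Fin n) ℤ, X = 1 + (p : ℤ) • G := by
  refine ⟨Matrix.of fun i j => (X i j - (1 : Matrix (Fin n) (Fin n) ℤ) i j) / p, ?_⟩
  ext i j
  have hd := h i j
  rw [Matrix.add_apply, Matrix.smul_apply, Matrix.of_apply, smul_eq_mul,
    Int.mul_ediv_cancel' hd]
  ring

lemma mulVec_int_injective {C : Matrix (Fin n) (Fin n) ℤ} (h : (toR C).det ≠ 0) :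
    Function.Injective (fun v : Fin n → ℤ => C *ᵥ v) := by
  intro a b hab
  apply vecR_injective
  have h1 : toR C *ᵥ vecR a = toR C *ᵥ vecR b := by
    rw [← vecR_mulVec, ← vecR_mulVec]
    exact congrArg vecR hab
  have h2 := congrArg (fun v => (toR C)⁻¹ *ᵥ v) h1
  simpa [Matrix.mulVec_mulVec, Matrix.nonsing_inv_mul _ (isUnit_iff_ne_zero.mpr h),
    Matrix.one_mulVec] using h2

lemma image_eq {C : Matrix (Fin n) (Fin n) ℤ} {E F : Finset (Fin n → ℤ)}
    (hEF : ∀ d, d ∈ E ↔ ∃ f ∈ F, d = C *ᵥ f) : E = F.image (fun f => C *ᵥ f) := by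
  ext d
  rw [hEF d, Finset.mem_image]
  constructor
  · rintro ⟨f, hf, hfe⟩; exact ⟨f, hf, hfe.symm⟩
  · rintro ⟨f, hf, hfe⟩; exact ⟨f, hf, hfe.symm⟩

lemma card_eq_of_rel {C : Matrix (Fin n) (Fin n) ℤ} (hdet : (toR C).det ≠ 0)
    {E F : Finset (Fin n → ℤ)} (hEF : ∀ d, d ∈ E ↔ ∃ f ∈ F, d = C *ᵥ f) :
    E.card = F.card := by
  rw [image_eq hEF, Finset.card_image_of_injective _ (mulVec_int_injective hdet)]

lemma mask_rel {C : Matrix (Fin n) (Fin n) ℤ} (hdet : (toR C).det ≠ 0)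
    {E F : Finset (Fin n → ℤ)} (hEF : ∀ d, d ∈ E ↔ ∃ f ∈ F, d = C *ᵥ f)
    (x : Fin n → ℝ) : mask E x = mask F ((toR C)ᵀ *ᵥ x) := by
  rw [image_eq hEF]
  unfold mask
  rw [Finset.card_image_of_injective _ (mulVec_int_injective hdet),
    Finset.sum_image (fun a _ b _ hfe => mulVec_int_injective hdet hfe)]
  congr 1
  refine Finset.sum_congr rfl fun f _ => ?_
  have harg : dotR (vecR (C *ᵥ f)) x = dotR (vecR f) ((toR C)ᵀ *ᵥ x) := by
    rw [vecR_mulVec, dotR_mulVec_left]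
  rw [harg]

lemma det_smul_inv {X : Matrix (Fin n) (Fin n) ℝ} (h : X.det ≠ 0) :
    X.det • X⁻¹ = X.adjugate := by
  rw [Matrix.inv_def, Ring.inverse_eq_inv, smul_smul, mul_inv_cancel₀ h, one_smul]

section Conj

variable {p : ℕ} {A B M Mt : Matrix (Fin n) (Fin n) ℤ} {D Dt : Finset (Fin n → ℤ)}

lemma T1 (hp0 : (p : ℝ) ≠ 0)
    (hdA : (toR A).det ≠ 0) (hdB : (toR B).det ≠ 0)
    (hG1 : ∃ G : Matrix (Fin n) (Fin n) ℤ, A * B = 1 + (p : ℤ) • G)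
    (hG2 : ∃ G : Matrix (Fin n) (Fin n) ℤ, B * A = 1 + (p : ℤ) • G)
    (hcase : (∀ d, d ∈ D ↔ ∃ dt ∈ Dt, d = B *ᵥ dt) ∨ (∀ dt, dt ∈ Dt ↔ ∃ d ∈ D, dt = A *ᵥ d))
    (w : Fin n → ℤ) :
    mask Dt ((p : ℝ)⁻¹ • vecR (Bᵀ *ᵥ w)) = mask D ((p : ℝ)⁻¹ • vecR w) := by
  have hsmul : ∀ (C : Matrix (Fin n) (Fin n) ℤ) (v : Fin n → ℤ),
      (toR C)ᵀ *ᵥ ((p : ℝ)⁻¹ • vecR v) = (p : ℝ)⁻¹ • vecR (Cᵀ *ᵥ v) := by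
    intro C v
    rw [Matrix.mulVec_smul, toR_transpose, ← vecR_mulVec]
  rcases hcase with h1 | h2
  · rw [mask_rel hdB h1 ((p : ℝ)⁻¹ • vecR w), hsmul]
  · obtain ⟨G2, hG2e⟩ := hG2
    rw [mask_rel hdA h2 ((p : ℝ)⁻¹ • vecR (Bᵀ *ᵥ w)), hsmul, Matrix.mulVec_mulVec,
      ← Matrix.transpose_mul, hG2e, Matrix.transpose_add, Matrix.transpose_one,
      Matrix.transpose_smul, Matrix.add_mulVec, Matrix.one_mulVec, Matrix.smul_mulVec,
      inv_p_smul_shift hp0, mask_add_int]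

lemma T2 (hp0 : (p : ℝ) ≠ 0)
    (hdA : (toR A).det ≠ 0) (hdB : (toR B).det ≠ 0)
    (hG1 : ∃ G : Matrix (Fin n) (Fin n) ℤ, A * B = 1 + (p : ℤ) • G)
    (hG2 : ∃ G : Matrix (Fin n) (Fin n) ℤ, B * A = 1 + (p : ℤ) • G)
    (hcase : (∀ d, d ∈ D ↔ ∃ dt ∈ Dt, d = B *ᵥ dt) ∨ (∀ dt, dt ∈ Dt ↔ ∃ d ∈ D, dt = A *ᵥ d))
    (w : Fin n → ℤ) :
    mask D ((p : ℝ)⁻¹ • vecR (Aᵀ *ᵥ w)) = mask Dt ((p : ℝ)⁻¹ • vecR w) := by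
  have hsmul : ∀ (C : Matrix (Fin n) (Fin n) ℤ) (v : Fin n → ℤ),
      (toR C)ᵀ *ᵥ ((p : ℝ)⁻¹ • vecR v) = (p : ℝ)⁻¹ • vecR (Cᵀ *ᵥ v) := by
    intro C v
    rw [Matrix.mulVec_smul, toR_transpose, ← vecR_mulVec]
  rcases hcase with h1 | h2
  · obtain ⟨G1, hG1e⟩ := hG1
    rw [mask_rel hdB h1 ((p : ℝ)⁻¹ • vecR (Aᵀ *ᵥ w)), hsmul, Matrix.mulVec_mulVec,
      ← Matrix.transpose_mul, hG1e, Matrix.transpose_add, Matrix.transpose_one,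
      Matrix.transpose_smul, Matrix.add_mulVec, Matrix.one_mulVec, Matrix.smul_mulVec,
      inv_p_smul_shift hp0, mask_add_int]
  · rw [mask_rel hdA h2 ((p : ℝ)⁻¹ • vecR w), hsmul]

end Conj

lemma vecR_mulVecT (C : Matrix (Fin n) (Fin n) ℤ) (v : Fin n → ℤ) :
    vecR (Cᵀ *ᵥ v) = (toR C)ᵀ *ᵥ vecR v := by
  rw [vecR_mulVec, ← toR_transpose]

lemma toR_add (C E : Matrix (Fin n) (Fin n) ℤ) : toR (C + E) = toR C + toR E := by
  ext i j
  simp [toR]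

lemma toR_nsmul (p : ℕ) (G : Matrix (Fin n) (Fin n) ℤ) :
    toR ((p : ℤ) • G) = (p : ℝ) • toR G := by
  ext i j
  simp only [toR, Matrix.map_apply, Matrix.smul_apply, smul_eq_mul]
  push_cast
  ring

lemma mask_shift_G {p : ℕ} (hp0 : (p : ℝ) ≠ 0) (E : Finset (Fin n → ℤ))
    (G : Matrix (Fin n) (Fin n) ℤ) (v : Fin n → ℤ) :
    mask E ((p : ℝ)⁻¹ • vecR (((1 : Matrix (Fin n) (Fin n) ℤ) + (p : ℤ) • G) *ᵥ v)) =
      mask E ((p : ℝ)⁻¹ • vecR v) := by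
  rw [Matrix.add_mulVec, Matrix.one_mulVec, Matrix.smul_mulVec,
    inv_p_smul_shift hp0, mask_add_int]

lemma choose_w {p : ℕ} (hp : p.Prime) {E : Finset (Fin n → ℤ)} (hZ : ZDn E ⊆ Ering p n)
    {N : ℕ} [NeZero N] (x : Fin N → (Fin n → ℝ)) (hx0 : x 0 = 0)
    (hmz : ∀ i j, i ≠ j → mask E (x i - x j) = 0) :
    ∃ u : Fin N → (Fin n → ℤ), ∀ i, vecR (u i) = (p : ℝ) • x i := by
  have hw : ∀ i, ∃ u : Fin n → ℤ, vecR u = (p : ℝ) • x i := by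
    intro i
    by_cases h0 : i = 0
    · subst h0; exact ⟨0, by rw [hx0, vecR_zero, smul_zero]⟩
    · refine exists_int_of_mask_zero hp.pos hZ ?_
      have := hmz i 0 h0
      rwa [hx0, sub_zero] at this
  exact ⟨fun i => (hw i).choose, fun i => (hw i).choose_spec⟩

lemma inv_p_sub {p : ℕ} (hp0 : (p : ℝ) ≠ 0) {N : ℕ} {u : Fin N → (Fin n → ℤ)}
    {x : Fin N → (Fin n → ℝ)} (hu : ∀ i, vecR (u i) = (p : ℝ) • x i) (i j : Fin N) :
    (p : ℝ)⁻¹ • vecR (u i - u j) = x i - x j := by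
  rw [vecR_sub, hu i, hu j, ← smul_sub, smul_smul, inv_mul_cancel₀ hp0, one_smul]

section Main

variable {p : ℕ} {A B M Mt : Matrix (Fin n) (Fin n) ℤ} {D Dt : Finset (Fin n → ℤ)}

lemma push (hp : p.Prime)
    (hdM : (toR M).det ≠ 0) (hdMt : (toR Mt).det ≠ 0)
    (hdA : (toR A).det ≠ 0) (hdB : (toR B).det ≠ 0)
    (hMt : Mt = A * M * B)
    (hG1 : ∃ G : Matrix (Fin n) (Fin n) ℤ, A * B = 1 + (p : ℤ) • G)
    (hG2 : ∃ G : Matrix (Fin n) (Fin n) ℤ, B * A = 1 + (p : ℤ) • G)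
    (hqB : IsCoprime (p : ℤ) B.det)
    (hcase : (∀ d, d ∈ D ↔ ∃ dt ∈ Dt, d = B *ᵥ dt) ∨ (∀ dt, dt ∈ Dt ↔ ∃ d ∈ D, dt = A *ᵥ d))
    (hZ : ZDn Dt ⊆ Ering p n ∨ ZDn D ⊆ Ering p n)
    (hAdm : Admissible M D) : Admissible Mt Dt := by
  have hp0 : (p : ℝ) ≠ 0 := Nat.cast_ne_zero.mpr hp.ne_zero
  have hcard : D.card = Dt.card := by
    rcases hcase with h1 | h2
    · exact card_eq_of_rel hdB h1
    · exact (card_eq_of_rel hdA h2).symm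
  rcases Finset.eq_empty_or_nonempty Dt with hDte | hDt
  · subst hDte; exact admissible_empty Mt
  haveI : NeZero Dt.card := ⟨(Finset.card_pos.mpr hDt).ne'⟩
  obtain ⟨s0, hsinj, hm⟩ := exists_of_admissible hAdm
  set s : Fin Dt.card → (Fin n → ℤ) := fun i => s0 (Fin.cast hcard.symm i) with hs
  have hm' : ∀ i j : Fin Dt.card, i ≠ j →
      mask D (((toR M)ᵀ)⁻¹ *ᵥ (vecR (s i) - vecR (s j))) = 0 := by
    intro i j hij
    refine hm _ _ (fun hc => hij ?_)
    apply Fin.ext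
    simpa using congrArg Fin.val hc
  set r : Fin Dt.card → (Fin n → ℝ) := fun i =>
    ((toR M)ᵀ)⁻¹ *ᵥ (vecR (s i) - vecR (s 0)) with hr
  have hr0 : r 0 = 0 := by
    show ((toR M)ᵀ)⁻¹ *ᵥ (vecR (s 0) - vecR (s 0)) = 0
    rw [sub_self, Matrix.mulVec_zero]
  have hrsub : ∀ i j, r i - r j = ((toR M)ᵀ)⁻¹ *ᵥ (vecR (s i) - vecR (s j)) := by
    intro i j
    show ((toR M)ᵀ)⁻¹ *ᵥ (vecR (s i) - vecR (s 0)) -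
        ((toR M)ᵀ)⁻¹ *ᵥ (vecR (s j) - vecR (s 0)) = _
    rw [← Matrix.mulVec_sub]
    congr 1
    abel
  have hmaskr : ∀ i j, i ≠ j → mask D (r i - r j) = 0 := by
    intro i j hij
    rw [hrsub]
    exact hm' i j hij
  obtain ⟨c, hcvec, hczero⟩ :
      ∃ c : Fin Dt.card → (Fin n → ℤ),
        (∀ i, vecR (c i) = (p : ℝ) • ((toR B)ᵀ *ᵥ r i)) ∧
        (∀ i j, i ≠ j → mask Dt ((p : ℝ)⁻¹ • vecR (c i - c j)) = 0) := by
    rcases hZ with hZt | hZD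
    · rcases hcase with h1 | h2
      · -- zero set of Dt, digit case 1
        have hmz2 : ∀ i j, i ≠ j →
            mask Dt ((toR B)ᵀ *ᵥ r i - (toR B)ᵀ *ᵥ r j) = 0 := by
          intro i j hij
          rw [← Matrix.mulVec_sub, ← mask_rel hdB h1]
          exact hmaskr i j hij
        obtain ⟨u, hu⟩ := choose_w hp hZt (fun i => (toR B)ᵀ *ᵥ r i)
          (by show (toR B)ᵀ *ᵥ r 0 = 0; rw [hr0, Matrix.mulVec_zero]) hmz2
        refine ⟨u, hu, ?_⟩
        intro i j hij
        rw [inv_p_sub hp0 hu]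
        exact hmz2 i j hij
      · -- zero set of Dt, digit case 2
        have hdAT : IsUnit ((toR A)ᵀ).det :=
          isUnit_iff_ne_zero.mpr (by rwa [Matrix.det_transpose])
        have hAx : ∀ i, (toR A)ᵀ *ᵥ (((toR A)ᵀ)⁻¹ *ᵥ r i) = r i := by
          intro i
          rw [Matrix.mulVec_mulVec, Matrix.mul_nonsing_inv _ hdAT, Matrix.one_mulVec]
        have hmz2 : ∀ i j, i ≠ j →
            mask Dt (((toR A)ᵀ)⁻¹ *ᵥ r i - ((toR A)ᵀ)⁻¹ *ᵥ r j) = 0 := by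
          intro i j hij
          rw [mask_rel hdA h2, Matrix.mulVec_sub, hAx, hAx]
          exact hmaskr i j hij
        obtain ⟨u, hu⟩ := choose_w hp hZt (fun i => ((toR A)ᵀ)⁻¹ *ᵥ r i)
          (by show ((toR A)ᵀ)⁻¹ *ᵥ r 0 = 0; rw [hr0, Matrix.mulVec_zero]) hmz2
        obtain ⟨G1, hG1e⟩ := hG1
        have hBA : Bᵀ * Aᵀ = (1 : Matrix (Fin n) (Fin n) ℤ) + (p : ℤ) • G1ᵀ := by
          rw [← Matrix.transpose_mul, hG1e, Matrix.transpose_add, Matrix.transpose_one,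
            Matrix.transpose_smul]
        refine ⟨fun i => (Bᵀ * Aᵀ) *ᵥ u i, ?_, ?_⟩
        · intro i
          show vecR ((Bᵀ * Aᵀ) *ᵥ u i) = (p : ℝ) • ((toR B)ᵀ *ᵥ r i)
          rw [vecR_mulVec, hu i, Matrix.mulVec_smul]
          congr 1
          rw [toR_mul, ← Matrix.mulVec_mulVec, ← toR_transpose A, hAx i, toR_transpose]
        · intro i j hij
          show mask Dt ((p : ℝ)⁻¹ • vecR ((Bᵀ * Aᵀ) *ᵥ u i - (Bᵀ * Aᵀ) *ᵥ u j)) = 0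
          rw [← Matrix.mulVec_sub, hBA, mask_shift_G hp0, inv_p_sub hp0 hu]
          exact hmz2 i j hij
    · -- zero set of D
      obtain ⟨w, hw⟩ := choose_w hp hZD r hr0 hmaskr
      refine ⟨fun i => Bᵀ *ᵥ w i, ?_, ?_⟩
      · intro i
        show vecR (Bᵀ *ᵥ w i) = (p : ℝ) • ((toR B)ᵀ *ᵥ r i)
        rw [vecR_mulVecT, hw i, Matrix.mulVec_smul]
      · intro i j hij
        show mask Dt ((p : ℝ)⁻¹ • vecR (Bᵀ *ᵥ w i - Bᵀ *ᵥ w j)) = 0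
        rw [← Matrix.mulVec_sub, T1 hp0 hdA hdB hG1 hG2 hcase, inv_p_sub hp0 hw]
        exact hmaskr i j hij
  -- common tail : build e and apply the core lemma
  obtain ⟨G2, hG2e⟩ := hG2
  have hAB2 : Aᵀ * Bᵀ = (1 : Matrix (Fin n) (Fin n) ℤ) + (p : ℤ) • G2ᵀ := by
    rw [← Matrix.transpose_mul, hG2e, Matrix.transpose_add, Matrix.transpose_one,
      Matrix.transpose_smul]
  have hABR : (toR A)ᵀ * (toR B)ᵀ = 1 + (p : ℝ) • (toR G2)ᵀ := by
    rw [toR_transpose, toR_transpose, toR_transpose, ← toR_mul, hAB2, toR_add, toR_one,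
      toR_nsmul]
  have hMtT : (toR Mt)ᵀ = (toR B)ᵀ * ((toR M)ᵀ * (toR A)ᵀ) := by
    rw [hMt, toR_mul, toR_mul, Matrix.transpose_mul, Matrix.transpose_mul]
  have hMdetT : IsUnit ((toR M)ᵀ).det :=
    isUnit_iff_ne_zero.mpr (by rwa [Matrix.det_transpose])
  have hMr : ∀ i, (toR M)ᵀ *ᵥ r i = vecR (s i) - vecR (s 0) := by
    intro i
    show (toR M)ᵀ *ᵥ (((toR M)ᵀ)⁻¹ *ᵥ (vecR (s i) - vecR (s 0))) = _
    rw [Matrix.mulVec_mulVec, Matrix.mul_nonsing_inv _ hMdetT, Matrix.one_mulVec]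
  have hadj : toR Bᵀ.adjugate * (toR B)ᵀ = (B.det : ℝ) • 1 := by
    rw [toR_adjugate, toR_transpose, Matrix.adjugate_mul, toR_det, Matrix.det_transpose]
  have h2 : ∀ i, toR Bᵀ.adjugate *ᵥ vecR (c i) = ((p : ℝ) * (B.det : ℝ)) • r i := by
    intro i
    rw [hcvec i, Matrix.mulVec_smul, Matrix.mulVec_mulVec, hadj,
      Matrix.smul_mulVec, Matrix.one_mulVec, smul_smul]
  have h3 : ∀ i, (toR Mt)ᵀ *ᵥ vecR (c i) =
      (p : ℝ) • vecR (Bᵀ *ᵥ (s i - s 0)) +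
      ((p : ℝ) * (p : ℝ)) • (((toR B)ᵀ * (toR M)ᵀ * (toR G2)ᵀ) *ᵥ r i) := by
    intro i
    have hmat : ((toR B)ᵀ * ((toR M)ᵀ * (toR A)ᵀ)) * (toR B)ᵀ =
        (toR B)ᵀ * (toR M)ᵀ + (p : ℝ) • ((toR B)ᵀ * (toR M)ᵀ * (toR G2)ᵀ) := by
      calc ((toR B)ᵀ * ((toR M)ᵀ * (toR A)ᵀ)) * (toR B)ᵀ
          = (toR B)ᵀ * ((toR M)ᵀ * ((toR A)ᵀ * (toR B)ᵀ)) := by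
            rw [Matrix.mul_assoc, Matrix.mul_assoc]
        _ = (toR B)ᵀ * ((toR M)ᵀ * (1 + (p : ℝ) • (toR G2)ᵀ)) := by rw [hABR]
        _ = (toR B)ᵀ * (toR M)ᵀ + (p : ℝ) • ((toR B)ᵀ * (toR M)ᵀ * (toR G2)ᵀ) := by
            rw [Matrix.mul_add, Matrix.mul_one, Matrix.mul_smul, Matrix.mul_add,
              Matrix.mul_smul, Matrix.mul_assoc]
    rw [hcvec i, Matrix.mulVec_smul, Matrix.mulVec_mulVec, hMtT, hmat, Matrix.add_mulVec,
      Matrix.smul_mulVec, ← Matrix.mulVec_mulVec, hMr i, smul_add, smul_smul]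
    congr 2
    rw [← vecR_sub, ← vecR_mulVecT]
  have htr : toR (Bᵀ * Mᵀ * G2ᵀ) = (toR B)ᵀ * (toR M)ᵀ * (toR G2)ᵀ := by
    rw [toR_mul, toR_mul, ← toR_transpose, ← toR_transpose, ← toR_transpose]
  refine admissible_core hp hdMt hDt c
    (fun i => B.det • (Bᵀ *ᵥ (s i - s 0)) + ((Bᵀ * Mᵀ * G2ᵀ) * Bᵀ.adjugate) *ᵥ c i)
    B.det hqB hczero ?_
  intro i
  apply vecR_injective
  show vecR (B.det • (Mtᵀ *ᵥ c i)) = vecR ((p : ℤ) •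
    (B.det • (Bᵀ *ᵥ (s i - s 0)) + ((Bᵀ * Mᵀ * G2ᵀ) * Bᵀ.adjugate) *ᵥ c i))
  have hL : vecR (B.det • (Mtᵀ *ᵥ c i)) =
      (B.det : ℝ) • ((p : ℝ) • vecR (Bᵀ *ᵥ (s i - s 0)) +
        ((p : ℝ) * (p : ℝ)) • (((toR B)ᵀ * (toR M)ᵀ * (toR G2)ᵀ) *ᵥ r i)) := by
    rw [vecR_smul, vecR_mulVec, ← toR_transpose, h3 i]
  have hR : vecR ((p : ℤ) •
      (B.det • (Bᵀ *ᵥ (s i - s 0)) + ((Bᵀ * Mᵀ * G2ᵀ) * Bᵀ.adjugate) *ᵥ c i)) =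
      (((p : ℤ)) : ℝ) • ((B.det : ℝ) • vecR (Bᵀ *ᵥ (s i - s 0)) +
        ((p : ℝ) * (B.det : ℝ)) • (((toR B)ᵀ * (toR M)ᵀ * (toR G2)ᵀ) *ᵥ r i)) := by
    rw [vecR_smul, vecR_add, vecR_smul, vecR_mulVec ((Bᵀ * Mᵀ * G2ᵀ) * Bᵀ.adjugate) (c i),
      toR_mul, ← Matrix.mulVec_mulVec, h2 i, htr, Matrix.mulVec_smul]
  rw [hL, hR]
  push_cast
  module

lemma pull (hp : p.Prime)
    (hdM : (toR M).det ≠ 0) (hdMt : (toR Mt).det ≠ 0)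
    (hdA : (toR A).det ≠ 0) (hdB : (toR B).det ≠ 0)
    (hMt : Mt = A * M * B)
    (hG1 : ∃ G : Matrix (Fin n) (Fin n) ℤ, A * B = 1 + (p : ℤ) • G)
    (hG2 : ∃ G : Matrix (Fin n) (Fin n) ℤ, B * A = 1 + (p : ℤ) • G)
    (hqB : IsCoprime (p : ℤ) B.det)
    (hcase : (∀ d, d ∈ D ↔ ∃ dt ∈ Dt, d = B *ᵥ dt) ∨ (∀ dt, dt ∈ Dt ↔ ∃ d ∈ D, dt = A *ᵥ d))
    (hZ : ZDn Dt ⊆ Ering p n ∨ ZDn D ⊆ Ering p n)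
    (hAdm : Admissible Mt Dt) : Admissible M D := by
  have hp0 : (p : ℝ) ≠ 0 := Nat.cast_ne_zero.mpr hp.ne_zero
  have hcard : D.card = Dt.card := by
    rcases hcase with h1 | h2
    · exact card_eq_of_rel hdB h1
    · exact (card_eq_of_rel hdA h2).symm
  rcases Finset.eq_empty_or_nonempty D with hDe | hD
  · subst hDe; exact admissible_empty M
  haveI : NeZero D.card := ⟨(Finset.card_pos.mpr hD).ne'⟩
  obtain ⟨s0, hsinj, hm⟩ := exists_of_admissible hAdm
  set s : Fin D.card → (Fin n → ℤ) := fun i => s0 (Fin.cast hcard i) with hs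
  have hm' : ∀ i j : Fin D.card, i ≠ j →
      mask Dt (((toR Mt)ᵀ)⁻¹ *ᵥ (vecR (s i) - vecR (s j))) = 0 := by
    intro i j hij
    refine hm _ _ (fun hc => hij ?_)
    apply Fin.ext
    simpa using congrArg Fin.val hc
  set r : Fin D.card → (Fin n → ℝ) := fun i =>
    ((toR Mt)ᵀ)⁻¹ *ᵥ (vecR (s i) - vecR (s 0)) with hr
  have hr0 : r 0 = 0 := by
    show ((toR Mt)ᵀ)⁻¹ *ᵥ (vecR (s 0) - vecR (s 0)) = 0
    rw [sub_self, Matrix.mulVec_zero]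
  have hrsub : ∀ i j, r i - r j = ((toR Mt)ᵀ)⁻¹ *ᵥ (vecR (s i) - vecR (s j)) := by
    intro i j
    show ((toR Mt)ᵀ)⁻¹ *ᵥ (vecR (s i) - vecR (s 0)) -
        ((toR Mt)ᵀ)⁻¹ *ᵥ (vecR (s j) - vecR (s 0)) = _
    rw [← Matrix.mulVec_sub]
    congr 1
    abel
  have hmaskr : ∀ i j, i ≠ j → mask Dt (r i - r j) = 0 := by
    intro i j hij
    rw [hrsub]
    exact hm' i j hij
  obtain ⟨c, hcvec, hczero⟩ :
      ∃ c : Fin D.card → (Fin n → ℤ),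
        (∀ i, vecR (c i) = (p : ℝ) • ((toR A)ᵀ *ᵥ r i)) ∧
        (∀ i j, i ≠ j → mask D ((p : ℝ)⁻¹ • vecR (c i - c j)) = 0) := by
    rcases hZ with hZt | hZD
    · -- zero set of Dt
      obtain ⟨w, hw⟩ := choose_w hp hZt r hr0 hmaskr
      refine ⟨fun i => Aᵀ *ᵥ w i, ?_, ?_⟩
      · intro i
        show vecR (Aᵀ *ᵥ w i) = (p : ℝ) • ((toR A)ᵀ *ᵥ r i)
        rw [vecR_mulVecT, hw i, Matrix.mulVec_smul]
      · intro i j hij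
        show mask D ((p : ℝ)⁻¹ • vecR (Aᵀ *ᵥ w i - Aᵀ *ᵥ w j)) = 0
        rw [← Matrix.mulVec_sub, T2 hp0 hdA hdB hG1 hG2 hcase, inv_p_sub hp0 hw]
        exact hmaskr i j hij
    · rcases hcase with h1 | h2
      · -- zero set of D, digit case 1
        have hdBT : IsUnit ((toR B)ᵀ).det :=
          isUnit_iff_ne_zero.mpr (by rwa [Matrix.det_transpose])
        have hBx : ∀ i, (toR B)ᵀ *ᵥ (((toR B)ᵀ)⁻¹ *ᵥ r i) = r i := by
          intro i
          rw [Matrix.mulVec_mulVec, Matrix.mul_nonsing_inv _ hdBT, Matrix.one_mulVec]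
        have hmz2 : ∀ i j, i ≠ j →
            mask D (((toR B)ᵀ)⁻¹ *ᵥ r i - ((toR B)ᵀ)⁻¹ *ᵥ r j) = 0 := by
          intro i j hij
          rw [mask_rel hdB h1, Matrix.mulVec_sub, hBx, hBx]
          exact hmaskr i j hij
        obtain ⟨u, hu⟩ := choose_w hp hZD (fun i => ((toR B)ᵀ)⁻¹ *ᵥ r i)
          (by show ((toR B)ᵀ)⁻¹ *ᵥ r 0 = 0; rw [hr0, Matrix.mulVec_zero]) hmz2
        obtain ⟨G2, hG2e⟩ := hG2
        have hAB2 : Aᵀ * Bᵀ = (1 : Matrix (Fin n) (Fin n) ℤ) + (p : ℤ) • G2ᵀ := by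
          rw [← Matrix.transpose_mul, hG2e, Matrix.transpose_add, Matrix.transpose_one,
            Matrix.transpose_smul]
        refine ⟨fun i => (Aᵀ * Bᵀ) *ᵥ u i, ?_, ?_⟩
        · intro i
          show vecR ((Aᵀ * Bᵀ) *ᵥ u i) = (p : ℝ) • ((toR A)ᵀ *ᵥ r i)
          rw [vecR_mulVec, hu i, Matrix.mulVec_smul]
          congr 1
          rw [toR_mul, ← Matrix.mulVec_mulVec, ← toR_transpose B, hBx i, toR_transpose]
        · intro i j hij
          show mask D ((p : ℝ)⁻¹ • vecR ((Aᵀ * Bᵀ) *ᵥ u i - (Aᵀ * Bᵀ) *ᵥ u j)) = 0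
          rw [← Matrix.mulVec_sub, hAB2, mask_shift_G hp0, inv_p_sub hp0 hu]
          exact hmz2 i j hij
      · -- zero set of D, digit case 2
        have hmz2 : ∀ i j, i ≠ j →
            mask D ((toR A)ᵀ *ᵥ r i - (toR A)ᵀ *ᵥ r j) = 0 := by
          intro i j hij
          rw [← Matrix.mulVec_sub, ← mask_rel hdA h2]
          exact hmaskr i j hij
        obtain ⟨u, hu⟩ := choose_w hp hZD (fun i => (toR A)ᵀ *ᵥ r i)
          (by show (toR A)ᵀ *ᵥ r 0 = 0; rw [hr0, Matrix.mulVec_zero]) hmz2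
        refine ⟨u, hu, ?_⟩
        intro i j hij
        rw [inv_p_sub hp0 hu]
        exact hmz2 i j hij
  -- common tail
  have hMtT : (toR Mt)ᵀ = (toR B)ᵀ * ((toR M)ᵀ * (toR A)ᵀ) := by
    rw [hMt, toR_mul, toR_mul, Matrix.transpose_mul, Matrix.transpose_mul]
  have hMAu : IsUnit ((toR M)ᵀ * (toR A)ᵀ).det := by
    rw [Matrix.det_mul, Matrix.det_transpose, Matrix.det_transpose]
    exact isUnit_iff_ne_zero.mpr (mul_ne_zero hdM hdA)
  have hkey : ∀ i, ((toR M)ᵀ * (toR A)ᵀ) *ᵥ r i =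
      ((toR B)ᵀ)⁻¹ *ᵥ (vecR (s i) - vecR (s 0)) := by
    intro i
    show ((toR M)ᵀ * (toR A)ᵀ) *ᵥ (((toR Mt)ᵀ)⁻¹ *ᵥ (vecR (s i) - vecR (s 0))) = _
    rw [Matrix.mulVec_mulVec]
    congr 1
    rw [hMtT, Matrix.mul_inv_rev, ← Matrix.mul_assoc, Matrix.mul_nonsing_inv _ hMAu,
      Matrix.one_mul]
  have hadjB : ((B.det : ℝ)) • ((toR B)ᵀ)⁻¹ = toR Bᵀ.adjugate := by
    have hd : ((toR B)ᵀ).det ≠ 0 := by rwa [Matrix.det_transpose]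
    have hds := det_smul_inv hd
    rw [Matrix.det_transpose, toR_det] at hds
    rw [hds, toR_adjugate, toR_transpose]
  refine admissible_core hp hdM hD c (fun i => Bᵀ.adjugate *ᵥ (s i - s 0)) B.det hqB hczero ?_
  intro i
  apply vecR_injective
  show vecR (B.det • (Mᵀ *ᵥ c i)) = vecR ((p : ℤ) • (Bᵀ.adjugate *ᵥ (s i - s 0)))
  have hL : vecR (B.det • (Mᵀ *ᵥ c i)) =
      (B.det : ℝ) • ((p : ℝ) • (((toR B)ᵀ)⁻¹ *ᵥ (vecR (s i) - vecR (s 0)))) := by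
    rw [vecR_smul, vecR_mulVec, ← toR_transpose, hcvec i, Matrix.mulVec_smul,
      Matrix.mulVec_mulVec, hkey i]
  have hR : vecR ((p : ℤ) • (Bᵀ.adjugate *ᵥ (s i - s 0))) =
      ((p : ℤ) : ℝ) • ((B.det : ℝ) • (((toR B)ᵀ)⁻¹ *ᵥ (vecR (s i) - vecR (s 0)))) := by
    rw [vecR_smul, vecR_mulVec, ← hadjB, Matrix.smul_mulVec, vecR_sub]
  rw [hL, hR]
  push_cast
  module

end Main


/-- If `(M,D)` and `(M̃,D̃)` are conjugate in `GL_n(p)` and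
`Z_{D̃}^n ⊆ E̊_p^n` or `Z_D^n ⊆ E̊_p^n`, then `(M,D)` is admissible iff `(M̃,D̃)` is. -/
theorem admissible_iff_of_conjugate {n : ℕ} (hn : 1 ≤ n) {p : ℕ} (hp : p.Prime)
    (M Mt : Matrix (Fin n) (Fin n) ℤ) (D Dt : Finset (Fin n → ℤ))
    (hM : IsExpanding M) (hMt : IsExpanding Mt)
    (hconj : ConjugateGL p M Mt D Dt)
    (hZ : ZDn Dt ⊆ Ering p n ∨ ZDn D ⊆ Ering p n) :
    Admissible M D ↔ Admissible Mt Dt := by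
  obtain ⟨A, B, hA, hB, hAB, hMtAB, hcase⟩ := hconj
  have hdM := det_ne_zero_of_expanding hM
  have hdMt := det_ne_zero_of_expanding hMt
  have hdA := det_ne_zero_of_not_dvd hA
  have hdB := det_ne_zero_of_not_dvd hB
  have hqB := coprime_det hp hB
  have hG1 := exists_G hAB
  have hG2 := exists_G (modeq_comm hp hAB)
  exact ⟨fun h => push hp hdM hdMt hdA hdB hMtAB hG1 hG2 hqB hcase hZ h,
         fun h => pull hp hdM hdMt hdA hdB hMtAB hG1 hG2 hqB hcase hZ h⟩

end SA
end
end

section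
/- Let p be a prime and M ∈ M_n(ℤ) an expanding matrix with det(M) = L satisfying gcd(L,p) = 1. Then for every integer j ≥ 0 and every λ ∈ E̊_p^n, one has L^{φ(p)·j}·(M^j λ + ℤ^n) ⊆ M^j(λ + ℤ^n), where φ is Euler's totient function (so φ(p) = p−1). -/
open MeasureTheory Matrix Set Complex
open scoped Real Pointwise ENNReal

noncomputable section

namespace SA

variable {n : ℕ}

/-- `L^{φ(p)·j}(M^j λ + ℤ^n) ⊆ M^j(λ + ℤ^n)`. -/
theorem pow_smul_subset {n : ℕ} {p : ℕ} (hp : p.Prime)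
    (M : Matrix (Fin n) (Fin n) ℤ) (hM : IsExpanding M)
    (L : ℤ) (hLdet : M.det = L) (hcop : Int.gcd L (p : ℤ) = 1)
    (j : ℕ) (lam : Fin n → ℝ) (hlam : lam ∈ Ering p n) :
    ∀ v : Fin n → ℤ, ∃ w : Fin n → ℤ,
      ((L ^ (Nat.totient p * j) : ℤ) : ℝ) • (((toR M) ^ j).mulVec lam + vecR v) =
        ((toR M) ^ j).mulVec (lam + vecR w) := by
  intro v
  obtain ⟨⟨l, hl, hx⟩, hne⟩ := hlam
  have hp2 : 2 ≤ p := hp.two_le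
  have hpR : (p : ℝ) ≠ 0 := Nat.cast_ne_zero.mpr hp.pos.ne'
  have hcop' : IsCoprime L (p : ℤ) := Int.isCoprime_iff_gcd_eq_one.mpr hcop
  have hferm : (L ^ (p - 1)) ^ j ≡ 1 [ZMOD (p : ℤ)] := by
    simpa using (Int.ModEq.pow_card_sub_one_eq_one hp hcop').pow j
  obtain ⟨k, hk⟩ : (p : ℤ) ∣ (L ^ (p - 1)) ^ j - 1 := hferm.symm.dvd
  set lInt : Fin n → ℤ := fun i => (l i : ℤ) with hlInt
  set u : Fin n → ℤ := (Matrix.adjugate (M ^ j)).mulVec v with hu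
  refine ⟨fun i => k * lInt i + L ^ ((p - 2) * j) * u i, ?_⟩
  have hA : toR (M ^ j) = (toR M) ^ j := by
    show ((Int.castRingHom ℝ).mapMatrix (M ^ j) : Matrix (Fin n) (Fin n) ℝ)
      = ((Int.castRingHom ℝ).mapMatrix M) ^ j
    exact map_pow _ M j
  have hvecmul : ∀ (B : Matrix (Fin n) (Fin n) ℤ) (x : Fin n → ℤ),
      vecR (B.mulVec x) = (toR B).mulVec (vecR x) := by
    intro B x
    funext i
    exact RingHom.map_mulVec (Int.castRingHom ℝ) B x i
  have hZ : (M ^ j).mulVec u = (L ^ j : ℤ) • v := by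
    rw [hu, Matrix.mulVec_mulVec, Matrix.mul_adjugate, Matrix.det_pow, hLdet,
      Matrix.smul_mulVec, Matrix.one_mulVec]
  have hadj : ((toR M) ^ j).mulVec (vecR u) = ((L : ℝ) ^ j) • vecR v := by
    rw [← hA, ← hvecmul, hZ]
    funext i
    simp [vecR]
  have hl' : vecR lInt = (p : ℝ) • lam := by
    funext i
    simp only [vecR, hlInt, Pi.smul_apply, smul_eq_mul, hx i, Int.cast_natCast]
    field_simp
  have hw : vecR (fun i => k * lInt i + L ^ ((p - 2) * j) * u i)
      = (k : ℝ) • vecR lInt + ((L : ℝ) ^ ((p - 2) * j)) • vecR u := by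
    funext i
    simp only [vecR, Pi.add_apply, Pi.smul_apply, smul_eq_mul]
    push_cast
    ring
  set X := ((toR M) ^ j).mulVec lam with hX
  set Y := vecR v with hY
  have hc : ((L ^ (Nat.totient p * j) : ℤ) : ℝ) = ((L : ℝ) ^ (p - 1)) ^ j := by
    rw [Nat.totient_prime hp]
    push_cast [pow_mul]
    ring
  set cR : ℝ := ((L : ℝ) ^ (p - 1)) ^ j with hcR
  have hkp : (k : ℝ) * (p : ℝ) = cR - 1 := by
    have h2 := congrArg (Int.cast : ℤ → ℝ) hk
    push_cast at h2
    linarith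
  have hsplit : (L : ℝ) ^ ((p - 2) * j) * (L : ℝ) ^ j = cR := by
    rw [hcR, ← pow_mul, ← pow_add]
    congr 1
    have : p - 2 + 1 = p - 1 := by omega
    calc (p - 2) * j + j = (p - 2 + 1) * j := by ring
      _ = (p - 1) * j := by rw [this]
  calc ((L ^ (Nat.totient p * j) : ℤ) : ℝ) • (X + Y) = cR • X + cR • Y := by
        rw [hc, smul_add]
    _ = ((toR M) ^ j).mulVec (lam + vecR fun i => k * lInt i + L ^ ((p - 2) * j) * u i) := by
        rw [Matrix.mulVec_add, hw, Matrix.mulVec_add, Matrix.mulVec_smul, Matrix.mulVec_smul,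
          hadj, hl', Matrix.mulVec_smul, ← hX, smul_smul, smul_smul, hkp, hsplit, sub_smul,
          one_smul]
        abel


end SA
end
end
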